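/- Let f: 2^N → R_+ be a monotone submodular function on a finite ground set N = {1,...,n} with all marginal values f(S+i) - f(S) in [0,1]. Let X_1,...,X_n be independent {0,1}-valued random variables, let R = {i : X_i = 1}, and let μ = E[f(R)]. Then for any δ > 0, Pr[f(R) ≥ (1+δ)μ] ≤ (e^δ/(1+δ)^{1+δ})^μ. -/

import Mathlib

open MeasureTheory ProbabilityTheory Finset

noncomputable def Ew {n : ℕ} (p : Fin n → ℝ) (s : Finset (Fin n))
    (g : Finset (Fin n) → ℝ) : ℝ :=
  ∑ S ∈ s.powerset, (∏ i ∈ s, if i ∈ S then p i else 1 - p i) * g S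

variable {n : ℕ} {p : Fin n → ℝ}

lemma Ew_empty (g : Finset (Fin n) → ℝ) : Ew p ∅ g = g ∅ := by
  simp [Ew]

lemma Ew_insert {i : Fin n} {s : Finset (Fin n)} (hi : i ∉ s)
    (g : Finset (Fin n) → ℝ) :
    Ew p (insert i s) g
      = Ew p s (fun S => (1 - p i) * g S + p i * g (insert i S)) := by
  unfold Ew
  rw [Finset.sum_powerset_insert hi]
  rw [← Finset.sum_add_distrib]
  refine Finset.sum_congr rfl ?_
  intro S hS
  have hSs : S ⊆ s := Finset.mem_powerset.1 hS
  have hiS : i ∉ S := fun h => hi (hSs h)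
  have h1 : (∏ j ∈ insert i s, if j ∈ S then p j else 1 - p j)
      = (1 - p i) * ∏ j ∈ s, if j ∈ S then p j else 1 - p j := by
    rw [Finset.prod_insert hi, if_neg hiS]
  have h2 : (∏ j ∈ insert i s, if j ∈ insert i S then p j else 1 - p j)
      = p i * ∏ j ∈ s, if j ∈ S then p j else 1 - p j := by
    rw [Finset.prod_insert hi, if_pos (Finset.mem_insert_self i S)]
    congr 1
    refine Finset.prod_congr rfl ?_
    intro j hj
    have : j ≠ i := fun h => hi (h ▸ hj)
    simp [Finset.mem_insert, this]
  rw [h1, h2]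
  ring

lemma w_nonneg (hp : ∀ i, p i ∈ Set.Icc (0:ℝ) 1) (s S : Finset (Fin n)) :
    0 ≤ ∏ i ∈ s, if i ∈ S then p i else 1 - p i := by
  refine Finset.prod_nonneg ?_
  intro i _
  by_cases h : i ∈ S
  · simp [h, (hp i).1]
  · simp only [h, if_false]
    linarith [(hp i).2]

lemma Ew_mono (hp : ∀ i, p i ∈ Set.Icc (0:ℝ) 1) {s : Finset (Fin n)}
    {g h : Finset (Fin n) → ℝ} (hgh : ∀ S, g S ≤ h S) :
    Ew p s g ≤ Ew p s h := by
  refine Finset.sum_le_sum ?_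
  intro S _
  exact mul_le_mul_of_nonneg_left (hgh S) (w_nonneg hp s S)

lemma Ew_nonneg (hp : ∀ i, p i ∈ Set.Icc (0:ℝ) 1) {s : Finset (Fin n)}
    {g : Finset (Fin n) → ℝ} (hg : ∀ S, 0 ≤ g S) : 0 ≤ Ew p s g := by
  have := Ew_mono (p := p) hp (s := s) (g := fun _ => (0:ℝ)) (h := g) hg
  simpa [Ew] using this

lemma Ew_add {s : Finset (Fin n)} (g h : Finset (Fin n) → ℝ) :
    Ew p s (fun S => g S + h S) = Ew p s g + Ew p s h := by
  simp [Ew, mul_add, Finset.sum_add_distrib]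

lemma Ew_smul {s : Finset (Fin n)} (c : ℝ) (g : Finset (Fin n) → ℝ) :
    Ew p s (fun S => c * g S) = c * Ew p s g := by
  simp [Ew, Finset.mul_sum, mul_left_comm]

/-- Harris inequality on the discrete cube. -/
lemma Ew_harris (hp : ∀ i, p i ∈ Set.Icc (0:ℝ) 1)
    (g h : Finset (Fin n) → ℝ)
    (hg : ∀ A B : Finset (Fin n), A ⊆ B → g A ≤ g B)
    (hh : ∀ A B : Finset (Fin n), A ⊆ B → h B ≤ h A)
    (s : Finset (Fin n)) :
    Ew p s (fun S => g S * h S) ≤ Ew p s g * Ew p s h := by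
  induction s using Finset.induction_on generalizing g h with
  | empty => simp [Ew_empty]
  | @insert i s hi ih =>
    rw [Ew_insert hi, Ew_insert hi g, Ew_insert hi h]
    set G : Finset (Fin n) → ℝ := fun S => (1 - p i) * g S + p i * g (insert i S) with hG
    set H : Finset (Fin n) → ℝ := fun S => (1 - p i) * h S + p i * h (insert i S) with hH
    have key : ∀ S, (1 - p i) * (g S * h S) + p i * (g (insert i S) * h (insert i S))
        ≤ G S * H S := by
      intro S
      have h1 : g S ≤ g (insert i S) := hg _ _ (Finset.subset_insert i S)
      have h2 : h (insert i S) ≤ h S := hh _ _ (Finset.subset_insert i S)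
      have hp0 := (hp i).1
      have hp1 := (hp i).2
      simp only [hG, hH]
      nlinarith [mul_nonneg (mul_nonneg hp0 (by linarith : (0:ℝ) ≤ 1 - p i))
        (mul_nonneg (sub_nonneg.2 h1) (sub_nonneg.2 h2))]
    calc Ew p s (fun S => (1 - p i) * (g S * h S) + p i * (g (insert i S) * h (insert i S)))
        ≤ Ew p s (fun S => G S * H S) := Ew_mono hp key
      _ ≤ Ew p s G * Ew p s H := by
          refine ih G H ?_ ?_
          · intro A B hAB
            have := hg A B hAB
            have h2 := hg (insert i A) (insert i B) (Finset.insert_subset_insert i hAB)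
            have hp0 := (hp i).1
            have hp1 := (hp i).2
            simp only [hG]
            nlinarith
          · intro A B hAB
            have := hh A B hAB
            have h2 := hh (insert i A) (insert i B) (Finset.insert_subset_insert i hAB)
            have hp0 := (hp i).1
            have hp1 := (hp i).2
            simp only [hH]
            nlinarith

lemma exp_interp {x l : ℝ} (hx0 : 0 ≤ x) (hx1 : x ≤ 1) (hl : 0 ≤ l) :
    Real.exp (l * x) ≤ 1 + (Real.exp l - 1) * x := by
  have h := convexOn_exp.2 (Set.mem_univ (0:ℝ)) (Set.mem_univ l)
    (by linarith : (0:ℝ) ≤ 1 - x) hx0 (by ring)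
  simp only [smul_eq_mul, mul_zero, zero_add, Real.exp_zero, mul_one] at h
  have : x * l = l * x := by ring
  rw [this] at h
  linarith

/-- The MGF bound for monotone submodular functions, on the discrete cube. -/
lemma Ew_mgf (hp : ∀ i, p i ∈ Set.Icc (0:ℝ) 1)
    (f : Finset (Fin n) → ℝ)
    (hmono : ∀ S T, S ⊆ T → f S ≤ f T)
    (hsub : ∀ A B, f (A ∪ B) + f (A ∩ B) ≤ f A + f B)
    (hmarg : ∀ (S : Finset (Fin n)) (i : Fin n),
      f (insert i S) - f S ∈ Set.Icc (0:ℝ) 1)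
    {l : ℝ} (hl : 0 ≤ l) (s : Finset (Fin n)) :
    Ew p s (fun S => Real.exp (l * f S))
      ≤ Real.exp (l * f ∅ + (Real.exp l - 1) * (Ew p s f - f ∅)) := by
  have hd_anti : ∀ (i : Fin n) (A B : Finset (Fin n)), A ⊆ B →
      f (insert i B) - f B ≤ f (insert i A) - f A := by
    intro i A B hAB
    have h1 := hsub (insert i A) B
    have h2 : insert i A ∪ B = insert i B := by
      rw [Finset.insert_union, Finset.union_eq_right.2 hAB]
    have h3 : A ⊆ insert i A ∩ B :=
      Finset.subset_inter (Finset.subset_insert i A) hAB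
    have h4 := hmono _ _ h3
    rw [h2] at h1
    linarith
  induction s using Finset.induction_on with
  | empty => simp [Ew_empty]
  | @insert i s hi ih =>
    rw [Ew_insert hi]
    set d : Finset (Fin n) → ℝ := fun S => f (insert i S) - f S with hd
    have hEe : 0 ≤ Ew p s (fun S => Real.exp (l * f S)) :=
      Ew_nonneg hp (fun S => (Real.exp_pos _).le)
    have hc : 0 ≤ p i * (Real.exp l - 1) := by
      have := (hp i).1
      have h1 : (1:ℝ) ≤ Real.exp l := by
        calc (1:ℝ) = Real.exp 0 := by simp
          _ ≤ Real.exp l := Real.exp_le_exp.2 hl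
      nlinarith
    have step1 : Ew p s (fun S => (1 - p i) * Real.exp (l * f S)
          + p i * Real.exp (l * f (insert i S)))
        ≤ Ew p s (fun S => Real.exp (l * f S)
          + (p i * (Real.exp l - 1)) * (Real.exp (l * f S) * d S)) := by
      refine Ew_mono hp ?_
      intro S
      have hdS := hmarg S i
      have hexp : Real.exp (l * f (insert i S))
          ≤ Real.exp (l * f S) * (1 + (Real.exp l - 1) * d S) := by
        have : l * f (insert i S) = l * f S + l * d S := by
          simp only [hd]; ring
        rw [this, Real.exp_add]
        exact mul_le_mul_of_nonneg_left (exp_interp hdS.1 hdS.2 hl)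
          (Real.exp_pos _).le
      have hp0 := (hp i).1
      have hp1 := (hp i).2
      nlinarith [(Real.exp_pos (l * f S)).le,
        mul_le_mul_of_nonneg_left hexp hp0]
    have step2 : Ew p s (fun S => Real.exp (l * f S) * d S)
        ≤ Ew p s (fun S => Real.exp (l * f S)) * Ew p s d := by
      refine Ew_harris hp _ _ ?_ ?_ s
      · intro A B hAB
        exact Real.exp_le_exp.2 (mul_le_mul_of_nonneg_left (hmono A B hAB) hl)
      · intro A B hAB
        exact hd_anti i A B hAB
    have hEwf : Ew p (insert i s) f = Ew p s f + p i * Ew p s d := by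
      rw [Ew_insert hi]
      have : (fun S => (1 - p i) * f S + p i * f (insert i S))
          = fun S => f S + p i * d S := by
        funext S; simp only [hd]; ring
      rw [this, Ew_add f (fun S => p i * d S), Ew_smul]
    calc Ew p s (fun S => (1 - p i) * Real.exp (l * f S)
          + p i * Real.exp (l * f (insert i S)))
        ≤ Ew p s (fun S => Real.exp (l * f S)
          + (p i * (Real.exp l - 1)) * (Real.exp (l * f S) * d S)) := step1
      _ = Ew p s (fun S => Real.exp (l * f S))
          + (p i * (Real.exp l - 1)) * Ew p s (fun S => Real.exp (l * f S) * d S) := by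
          rw [Ew_add, Ew_smul]
      _ ≤ Ew p s (fun S => Real.exp (l * f S))
          + (p i * (Real.exp l - 1))
            * (Ew p s (fun S => Real.exp (l * f S)) * Ew p s d) := by
          have := mul_le_mul_of_nonneg_left step2 hc
          linarith
      _ = Ew p s (fun S => Real.exp (l * f S))
            * (1 + (p i * (Real.exp l - 1)) * Ew p s d) := by ring
      _ ≤ Ew p s (fun S => Real.exp (l * f S))
            * Real.exp ((p i * (Real.exp l - 1)) * Ew p s d) := by
          refine mul_le_mul_of_nonneg_left ?_ hEe
          have := Real.add_one_le_exp ((p i * (Real.exp l - 1)) * Ew p s d)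
          linarith
      _ ≤ Real.exp (l * f ∅ + (Real.exp l - 1) * (Ew p s f - f ∅))
            * Real.exp ((p i * (Real.exp l - 1)) * Ew p s d) :=
          mul_le_mul_of_nonneg_right ih (Real.exp_pos _).le
      _ = Real.exp (l * f ∅ + (Real.exp l - 1) * (Ew p (insert i s) f - f ∅)) := by
          rw [← Real.exp_add, hEwf]; ring_nf

/-- Expectation of a product of independent, bounded random variables. -/
lemma indep_integral_prod {Ω : Type*} [MeasurableSpace Ω] (P : Measure Ω)
    [IsProbabilityMeasure P] {n : ℕ} (Y : Fin n → Ω → ℝ)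
    (hYmeas : ∀ i, Measurable (Y i)) (hYbd : ∀ i ω, |Y i ω| ≤ 1)
    (hY : iIndepFun Y P) (s : Finset (Fin n)) :
    ∫ ω, ∏ i ∈ s, Y i ω ∂P = ∏ i ∈ s, ∫ ω, Y i ω ∂P := by
  have hint : ∀ (Z : Ω → ℝ), Measurable Z → (∀ ω, |Z ω| ≤ 1) → Integrable Z P := by
    intro Z hZ hb
    exact Integrable.mono' (integrable_const 1) hZ.aestronglyMeasurable
      (ae_of_all _ fun ω => by simpa using hb ω)
  induction s using Finset.induction_on with
  | empty => simp
  | @insert j s hj ih =>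
    have hprodmeas : Measurable (fun ω => ∏ i ∈ s, Y i ω) :=
      Finset.measurable_prod s (fun i _ => hYmeas i)
    have hprodbd : ∀ ω, |∏ i ∈ s, Y i ω| ≤ 1 := by
      intro ω
      rw [Finset.abs_prod]
      exact Finset.prod_le_one (fun i _ => abs_nonneg _) (fun i _ => hYbd i ω)
    have hindep : IndepFun (Y j) (fun ω => ∏ i ∈ s, Y i ω) P := by
      have h1 := hY.indepFun_finset {j} s (Finset.disjoint_singleton_left.2 hj) hYmeas
      have hφ : Measurable (fun v : {x // x ∈ ({j} : Finset (Fin n))} → ℝ =>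
          v ⟨j, Finset.mem_singleton_self j⟩) := measurable_pi_apply _
      have hψ : Measurable (fun v : {x // x ∈ s} → ℝ =>
          ∏ i : {x // x ∈ s}, v i) :=
        Finset.measurable_prod Finset.univ (fun i _ => measurable_pi_apply i)
      have h2 := h1.comp hφ hψ
      have e1 : ((fun v : {x // x ∈ ({j} : Finset (Fin n))} → ℝ =>
          v ⟨j, Finset.mem_singleton_self j⟩) ∘ (fun a (i : {x // x ∈ ({j} : Finset (Fin n))}) => Y i a))
          = Y j := rfl
      have e2 : ((fun v : {x // x ∈ s} → ℝ => ∏ i : {x // x ∈ s}, v i)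
          ∘ (fun a (i : {x // x ∈ s}) => Y i a))
          = fun ω => ∏ i ∈ s, Y i ω := by
        funext ω
        simp only [Function.comp_apply]
        exact Finset.prod_coe_sort s (fun i => Y i ω)
      rw [e1, e2] at h2
      exact h2
    simp only [Finset.prod_insert hj]
    rw [← ih]
    calc ∫ ω, Y j ω * ∏ i ∈ s, Y i ω ∂P
        = (∫ ω, Y j ω ∂P) * ∫ ω, ∏ i ∈ s, Y i ω ∂P :=
        hindep.integral_fun_mul_eq_mul_integral (hint _ (hYmeas j) (hYbd j)).aestronglyMeasurable
          (hint _ hprodmeas hprodbd).aestronglyMeasurable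

theorem stmt_5 {Ω : Type*} [MeasurableSpace Ω] (P : Measure Ω) [IsProbabilityMeasure P]
    {n : ℕ} (f : Finset (Fin n) → ℝ)
    (hnonneg : ∀ S, 0 ≤ f S)
    (hmono : ∀ S T, S ⊆ T → f S ≤ f T)
    (hsub : ∀ A B, f (A ∪ B) + f (A ∩ B) ≤ f A + f B)
    (hmarg : ∀ (S : Finset (Fin n)) (i : Fin n),
      f (insert i S) - f S ∈ Set.Icc (0:ℝ) 1)
    (X : Fin n → Ω → ℝ)
    (hmeas : ∀ i, Measurable (X i))
    (h01 : ∀ i ω, X i ω = 0 ∨ X i ω = 1)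
    (hindep : iIndepFun X P)
    (R : Ω → Finset (Fin n))
    (hR : ∀ ω, R ω = Finset.univ.filter fun i => X i ω = 1)
    (m : ℝ) (hm : m = ∫ ω, f (R ω) ∂P)
    (δ : ℝ) (hδ : 0 < δ) :
    (P {ω | (1 + δ) * m ≤ f (R ω)}).toReal
      ≤ (Real.exp δ / (1 + δ) ^ (1 + δ)) ^ m := by
  classical
  have h1δ : (0:ℝ) < 1 + δ := by linarith
  set l : ℝ := Real.log (1 + δ) with hldef
  have hl0 : 0 ≤ l := Real.log_nonneg (by linarith)
  have hel : Real.exp l = 1 + δ := Real.exp_log h1δ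
  set p : Fin n → ℝ := fun i => ∫ ω, X i ω ∂P with hpdef
  have hX0 : ∀ i ω, 0 ≤ X i ω := by
    intro i ω; rcases h01 i ω with h | h <;> simp [h]
  have hX1 : ∀ i ω, X i ω ≤ 1 := by
    intro i ω; rcases h01 i ω with h | h <;> simp [h]
  have hintX : ∀ i, Integrable (X i) P := by
    intro i
    refine Integrable.mono' (integrable_const 1) (hmeas i).aestronglyMeasurable
      (ae_of_all _ fun ω => ?_)
    rw [Real.norm_eq_abs, abs_of_nonneg (hX0 i ω)]; exact hX1 i ω
  have hp : ∀ i, p i ∈ Set.Icc (0:ℝ) 1 := by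
    intro i
    constructor
    · exact integral_nonneg (hX0 i)
    · calc ∫ ω, X i ω ∂P ≤ ∫ _ω, (1:ℝ) ∂P :=
            integral_mono (hintX i) (integrable_const 1) (hX1 i)
        _ = 1 := by simp
  set Y : Finset (Fin n) → Fin n → Ω → ℝ :=
    fun S i ω => if i ∈ S then X i ω else 1 - X i ω with hYdef
  have hYmeas : ∀ S i, Measurable (Y S i) := by
    intro S i
    by_cases h : i ∈ S
    · simpa [hYdef, h] using hmeas i
    · simp only [hYdef, h, if_false]; exact (hmeas i).const_sub 1
  have hYbd : ∀ S i ω, |Y S i ω| ≤ 1 := by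
    intro S i ω
    rcases h01 i ω with h | h <;> by_cases hiS : i ∈ S <;> simp [hYdef, h, hiS]
  have hYindep : ∀ S, iIndepFun (Y S) P := by
    intro S
    have : Y S = fun i => (fun x : ℝ => if i ∈ S then x else 1 - x) ∘ X i := by
      funext i ω; by_cases h : i ∈ S <;> simp [hYdef, h]
    rw [this]
    refine hindep.comp _ fun i => ?_
    by_cases h : i ∈ S
    · simp only [h, if_true]; exact measurable_id'
    · simp only [h, if_false]; exact measurable_id.const_sub 1
  have hIntY : ∀ S i, ∫ ω, Y S i ω ∂P = if i ∈ S then p i else 1 - p i := by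
    intro S i
    by_cases h : i ∈ S
    · simp only [hYdef, h, if_true]
      rfl
    · simp only [hYdef, h, if_false]
      rw [integral_sub (integrable_const 1) (hintX i)]
      simp
      rfl
  have key : ∀ (g : Finset (Fin n) → ℝ) (ω : Ω), g (R ω)
      = ∑ S ∈ (Finset.univ : Finset (Fin n)).powerset, (∏ i, Y S i ω) * g S := by
    intro g ω
    have hprod : ∀ S : Finset (Fin n),
        (∏ i, Y S i ω) = if S = R ω then 1 else 0 := by
      intro S
      have hY1 : ∀ i : Fin n, Y S i ω = if (i ∈ S ↔ i ∈ R ω) then 1 else 0 := by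
        intro i
        rcases h01 i ω with h | h <;> by_cases hiS : i ∈ S <;>
          simp [hYdef, hiS, h, hR ω]
      rw [Finset.prod_congr rfl fun i _ => hY1 i, Finset.prod_boole]
      have heq : (∀ i : Fin n, (i ∈ S ↔ i ∈ R ω)) ↔ S = R ω :=
        Finset.ext_iff.symm
      simp only [Finset.mem_univ, true_implies, heq]
    rw [Finset.sum_congr rfl fun S _ => by rw [hprod S]]
    simp only [ite_mul, one_mul, zero_mul]
    rw [Finset.sum_ite_eq' _ (R ω) g]
    simp
  have hprodint : ∀ S : Finset (Fin n), Integrable (fun ω => ∏ i, Y S i ω) P := by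
    intro S
    refine Integrable.mono' (integrable_const 1)
      (Finset.measurable_prod Finset.univ fun i _ => hYmeas S i).aestronglyMeasurable
      (ae_of_all _ fun ω => ?_)
    rw [Real.norm_eq_abs, Finset.abs_prod]
    exact Finset.prod_le_one (fun i _ => abs_nonneg _) (fun i _ => hYbd S i ω)
  have transfer : ∀ g : Finset (Fin n) → ℝ,
      ∫ ω, g (R ω) ∂P = Ew p Finset.univ g := by
    intro g
    have e : (fun ω => g (R ω))
        = fun ω => ∑ S ∈ (Finset.univ : Finset (Fin n)).powerset,
            (∏ i, Y S i ω) * g S := funext (key g)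
    rw [e, integral_finset_sum _ fun S _ => (hprodint S).mul_const _]
    unfold Ew
    refine Finset.sum_congr rfl fun S _ => ?_
    rw [integral_mul_const,
      indep_integral_prod P (Y S) (hYmeas S) (hYbd S) (hYindep S)]
    congr 1
    exact Finset.prod_congr rfl fun i _ => hIntY S i
  have intgR : ∀ g : Finset (Fin n) → ℝ, Integrable (fun ω => g (R ω)) P := by
    intro g
    have e2 : (fun ω => g (R ω)) = fun ω => ∑ S ∈ (Finset.univ : Finset (Fin n)).powerset,
        (∏ i, Y S i ω) * g S := funext (key g)
    rw [e2]
    exact integrable_finset_sum _ fun S _ => (hprodint S).mul_const _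
  have hm' : m = Ew p Finset.univ f := by rw [hm, transfer f]
  have hmgf : ∫ ω, Real.exp (l * f (R ω)) ∂P ≤ Real.exp (δ * m) := by
    have ht : ∫ ω, Real.exp (l * f (R ω)) ∂P
        = Ew p Finset.univ (fun S => Real.exp (l * f S)) :=
      transfer (fun S => Real.exp (l * f S))
    rw [ht]
    have h1 := Ew_mgf hp f hmono hsub hmarg hl0 Finset.univ
    rw [← hm'] at h1
    refine h1.trans (Real.exp_le_exp.2 ?_)
    rw [hel]
    have hfe : 0 ≤ f ∅ := hnonneg ∅
    have hlδ : l ≤ δ := by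
      have := Real.log_le_sub_one_of_pos h1δ
      simpa [hldef] using this
    nlinarith
  set a : ℝ := (1 + δ) * m with hadef
  have hgint : Integrable (fun ω => Real.exp (l * f (R ω))) P :=
    intgR (fun S => Real.exp (l * f S))
  have hmarkov := mul_meas_ge_le_integral_of_nonneg
    (ae_of_all P fun ω => (Real.exp_pos (l * f (R ω))).le) hgint (Real.exp (l * a))
  have hsubset : {ω | (1 + δ) * m ≤ f (R ω)}
      ⊆ {ω | Real.exp (l * a) ≤ Real.exp (l * f (R ω))} := by
    intro ω hω
    simp only [Set.mem_setOf_eq] at *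
    exact Real.exp_le_exp.2 (mul_le_mul_of_nonneg_left hω hl0)
  have hmono' : (P {ω | (1 + δ) * m ≤ f (R ω)}).toReal
      ≤ (P {ω | Real.exp (l * a) ≤ Real.exp (l * f (R ω))}).toReal :=
    ENNReal.toReal_mono (measure_ne_top P _) (measure_mono hsubset)
  have hεpos : (0:ℝ) < Real.exp (l * a) := Real.exp_pos _
  have final : (P {ω | (1 + δ) * m ≤ f (R ω)}).toReal
      ≤ Real.exp (δ * m - l * a) := by
    have h2 : Real.exp (l * a)
        * (P {ω | Real.exp (l * a) ≤ Real.exp (l * f (R ω))}).toReal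
        ≤ Real.exp (δ * m) := hmarkov.trans hmgf
    rw [Real.exp_sub]
    refine hmono'.trans ((le_div_iff₀ hεpos).2 ?_)
    rw [mul_comm]
    exact h2
  have hrhs : (Real.exp δ / (1 + δ) ^ (1 + δ)) ^ m = Real.exp (δ * m - l * a) := by
    have hbpos : (0:ℝ) < Real.exp δ / (1 + δ) ^ (1 + δ) :=
      div_pos (Real.exp_pos δ) (Real.rpow_pos_of_pos h1δ _)
    rw [Real.rpow_def_of_pos hbpos,
      Real.log_div (Real.exp_ne_zero δ) (ne_of_gt (Real.rpow_pos_of_pos h1δ _)),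
      Real.log_exp, Real.log_rpow h1δ]
    congr 1
    simp only [hadef, hldef]
    ring
  rw [hrhs]
  exact final
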